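/- Let a, c, d be positive integers and set b = 1. For the pair (X, Oz) associated to the complex surface V = {(x,y,z) ∈ ℂ³ : y^a = z·x^c + x^d}, Whitney (a)-regularity at the origin holds if and only if Whitney (b)-regularity at the origin holds; indeed both are equivalent to (a = 1 or d ≤ c). -/

import Mathlib

open Filter

noncomputable section

/-- x-partial derivative of f(x,y,z) = y^a - z^b*x^c - x^d. -/
def fxC (b c d : ℕ) (x z : ℂ) : ℂ :=
  -(c : ℂ) * z ^ b * x ^ (c - 1) - (d : ℂ) * x ^ (d - 1)

/-- y-partial derivative of f. -/
def fyC (a : ℕ) (y : ℂ) : ℂ := (a : ℂ) * y ^ (a - 1)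

/-- z-partial derivative of f. -/
def fzC (b c : ℕ) (x z : ℂ) : ℂ := -(b : ℂ) * z ^ (b - 1) * x ^ c

/-- Hermitian norm on ℂ³. -/
def nrm3C (u v w : ℂ) : ℝ := Real.sqrt (‖u‖ ^ 2 + ‖v‖ ^ 2 + ‖w‖ ^ 2)

/-- Hermitian norm on ℂ². -/
def nrm2C (u v : ℂ) : ℝ := Real.sqrt (‖u‖ ^ 2 + ‖v‖ ^ 2)

/-- Norm of the gradient ∇f(x,y,z). -/
def gradNormC (a b c d : ℕ) (x y z : ℂ) : ℝ :=
  nrm3C (fxC b c d x z) (fyC a y) (fzC b c x z)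

/-- The gradient ∇f(x,y,z) is nonzero. -/
def gradNeC (a b c d : ℕ) (x y z : ℂ) : Prop :=
  ¬ (fxC b c d x z = 0 ∧ fyC a y = 0 ∧ fzC b c x z = 0)

/-- Membership in X = V \ Oz, where V = {y^a = z^b x^c + x^d} and Oz is the z-axis. -/
def inXC (a b c d : ℕ) (x y z : ℂ) : Prop :=
  y ^ a = z ^ b * x ^ c + x ^ d ∧ ¬ (x = 0 ∧ y = 0)

/-- Whitney (a)-regularity of the pair (X, Oz) at the origin. -/
def aRegC (a b c d : ℕ) : Prop :=
  ∀ x y z : ℕ → ℂ,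
    (∀ n, inXC a b c d (x n) (y n) (z n)) →
    Tendsto (fun n => (x n, y n, z n)) atTop (nhds ((0 : ℂ), (0 : ℂ), (0 : ℂ))) →
    (∀ n, gradNeC a b c d (x n) (y n) (z n)) →
    Tendsto (fun n => ‖fzC b c (x n) (z n)‖ / gradNormC a b c d (x n) (y n) (z n))
      atTop (nhds 0)

/-- The (bᵖⁱ) condition for the retraction π(x,y,z) = (0,0,z). -/
def bpiC (a b c d : ℕ) : Prop :=
  ∀ x y z : ℕ → ℂ,
    (∀ n, inXC a b c d (x n) (y n) (z n)) →
    Tendsto (fun n => (x n, y n, z n)) atTop (nhds ((0 : ℂ), (0 : ℂ), (0 : ℂ))) →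
    (∀ n, gradNeC a b c d (x n) (y n) (z n)) →
    Tendsto (fun n => ‖x n * fxC b c d (x n) (z n) + y n * fyC a (y n)‖ /
        (nrm2C (x n) (y n) * gradNormC a b c d (x n) (y n) (z n)))
      atTop (nhds 0)

/-- Whitney (b)-regularity of the pair (X, Oz) at the origin. -/
def bRegC (a b c d : ℕ) : Prop := aRegC a b c d ∧ bpiC a b c d

/-- Kuo–Verdier (w)-regularity of the pair (X, Oz) at the origin. -/
def wRegC (a b c d : ℕ) : Prop :=
  ∃ C : ℝ, 0 < C ∧ ∃ ε : ℝ, 0 < ε ∧ ∀ x y z : ℂ,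
    inXC a b c d x y z → nrm3C x y z < ε → gradNeC a b c d x y z →
    ‖fzC b c x z‖ ≤ C * nrm2C x y * gradNormC a b c d x y z

-- ## helpers

lemma nrm3_ge1 (u v w : ℂ) : ‖u‖ ≤ nrm3C u v w := by
  have h := Real.sqrt_le_sqrt (show ‖u‖^2 ≤ ‖u‖ ^ 2 + ‖v‖ ^ 2 + ‖w‖ ^ 2 from by
    nlinarith [sq_nonneg ‖v‖, sq_nonneg ‖w‖])
  rwa [Real.sqrt_sq (norm_nonneg _)] at h

lemma nrm3_ge2 (u v w : ℂ) : ‖v‖ ≤ nrm3C u v w := by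
  have h := Real.sqrt_le_sqrt (show ‖v‖^2 ≤ ‖u‖ ^ 2 + ‖v‖ ^ 2 + ‖w‖ ^ 2 from by
    nlinarith [sq_nonneg ‖u‖, sq_nonneg ‖w‖])
  rwa [Real.sqrt_sq (norm_nonneg _)] at h

lemma nrm3_ge3 (u v w : ℂ) : ‖w‖ ≤ nrm3C u v w := by
  have h := Real.sqrt_le_sqrt (show ‖w‖^2 ≤ ‖u‖ ^ 2 + ‖v‖ ^ 2 + ‖w‖ ^ 2 from by
    nlinarith [sq_nonneg ‖u‖, sq_nonneg ‖v‖])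
  rwa [Real.sqrt_sq (norm_nonneg _)] at h

lemma nrm3_nonneg (u v w : ℂ) : 0 ≤ nrm3C u v w := Real.sqrt_nonneg _

lemma nrm2_ge1 (u v : ℂ) : ‖u‖ ≤ nrm2C u v := by
  have h := Real.sqrt_le_sqrt (show ‖u‖^2 ≤ ‖u‖ ^ 2 + ‖v‖ ^ 2 from by nlinarith [sq_nonneg ‖v‖])
  rwa [Real.sqrt_sq (norm_nonneg _)] at h

lemma nrm2_ge2 (u v : ℂ) : ‖v‖ ≤ nrm2C u v := by
  have h := Real.sqrt_le_sqrt (show ‖v‖^2 ≤ ‖u‖ ^ 2 + ‖v‖ ^ 2 from by nlinarith [sq_nonneg ‖u‖])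
  rwa [Real.sqrt_sq (norm_nonneg _)] at h

lemma nrm2_nonneg (u v : ℂ) : 0 ≤ nrm2C u v := Real.sqrt_nonneg _

lemma grad_nonneg (a b c d : ℕ) (x y z : ℂ) : 0 ≤ gradNormC a b c d x y z :=
  Real.sqrt_nonneg _

lemma grad_ge_fx (a b c d : ℕ) (x y z : ℂ) : ‖fxC b c d x z‖ ≤ gradNormC a b c d x y z :=
  nrm3_ge1 _ _ _

lemma grad_ge_fy (a b c d : ℕ) (x y z : ℂ) : ‖fyC a y‖ ≤ gradNormC a b c d x y z :=
  nrm3_ge2 _ _ _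

lemma grad_ge_fz (a b c d : ℕ) (x y z : ℂ) : ‖fzC b c x z‖ ≤ gradNormC a b c d x y z :=
  nrm3_ge3 _ _ _

lemma tendsto_zero_of_pow (k : ℕ) (f : ℕ → ℝ) (hf : ∀ n, 0 ≤ f n)
    (h : Tendsto (fun n => f n ^ k) atTop (nhds 0)) : Tendsto f atTop (nhds 0) := by
  rw [Metric.tendsto_atTop] at h ⊢
  intro ε hε
  obtain ⟨N, hN⟩ := h (ε ^ k) (pow_pos hε k)
  refine ⟨N, fun n hn => ?_⟩
  have hh := hN n hn
  rw [Real.dist_eq, sub_zero, abs_of_nonneg (pow_nonneg (hf n) k)] at hh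
  rw [Real.dist_eq, sub_zero, abs_of_nonneg (hf n)]
  by_contra hcon
  push_neg at hcon
  exact absurd hh (not_lt.2 (pow_le_pow_left₀ hε.le hcon k))

lemma norm_fz_one (c : ℕ) (x z : ℂ) : ‖fzC 1 c x z‖ = ‖x‖ ^ c := by
  simp [fzC]

lemma seq_x {x y z : ℕ → ℂ}
    (h : Tendsto (fun n => (x n, y n, z n)) atTop (nhds ((0:ℂ), (0:ℂ), (0:ℂ)))) :
    Tendsto x atTop (nhds 0) := by
  have := (continuous_fst.tendsto ((0:ℂ), (0:ℂ), (0:ℂ))).comp h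
  simpa [Function.comp_def] using this

lemma seq_y {x y z : ℕ → ℂ}
    (h : Tendsto (fun n => (x n, y n, z n)) atTop (nhds ((0:ℂ), (0:ℂ), (0:ℂ)))) :
    Tendsto y atTop (nhds 0) := by
  have := ((continuous_fst.comp continuous_snd).tendsto ((0:ℂ), (0:ℂ), (0:ℂ))).comp h
  simpa [Function.comp_def] using this

lemma seq_z {x y z : ℕ → ℂ}
    (h : Tendsto (fun n => (x n, y n, z n)) atTop (nhds ((0:ℂ), (0:ℂ), (0:ℂ)))) :
    Tendsto z atTop (nhds 0) := by
  have := ((continuous_snd.comp continuous_snd).tendsto ((0:ℂ), (0:ℂ), (0:ℂ))).comp h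
  simpa [Function.comp_def] using this

lemma x_ne_zero {a c d : ℕ} (ha : 0 < a) (hc : 0 < c) (hd : 0 < d) {x y z : ℂ}
    (h : inXC a 1 c d x y z) : x ≠ 0 := by
  rintro rfl
  obtain ⟨hV, hne⟩ := h
  apply hne
  refine ⟨rfl, ?_⟩
  have : y ^ a = 0 := by
    rw [hV, zero_pow hc.ne', zero_pow hd.ne']; ring
  exact pow_eq_zero_iff ha.ne' |>.mp this

lemma fx_factor {c d : ℕ} (hd : 0 < d) (hdc : d ≤ c) (x z : ℂ) :
    fxC 1 c d x z = -(x ^ (d-1) * ((c:ℂ) * z * x ^ (c-d) + d)) := by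
  have h1 : x ^ (d-1) * x ^ (c-d) = x ^ (c-1) := by rw [← pow_add]; congr 1; omega
  simp only [fxC, pow_one]
  rw [show -(x ^ (d-1) * ((c:ℂ) * z * x ^ (c-d) + d))
      = -((c:ℂ) * z * (x ^ (d-1) * x ^ (c-d))) - d * x ^ (d-1) from by ring, h1]
  ring

-- eventual lower bound on ‖fx‖
lemma ev_fx {c d : ℕ} (hd : 0 < d) (hdc : d ≤ c) {x z : ℕ → ℂ}
    (hx : Tendsto x atTop (nhds 0)) (hz : Tendsto z atTop (nhds 0)) :
    ∀ᶠ n in atTop, (d:ℝ)/2 * ‖x n‖ ^ (d-1) ≤ ‖fxC 1 c d (x n) (z n)‖ := by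
  have hw : Tendsto (fun n => (c:ℂ) * z n * (x n) ^ (c-d)) atTop (nhds 0) := by
    have := ((tendsto_const_nhds (x := (c:ℂ))).mul hz).mul (hx.pow (c-d))
    simpa using this
  have hsm : ∀ᶠ n in atTop, ‖(c:ℂ) * z n * (x n) ^ (c-d)‖ < (d:ℝ)/2 := by
    have := hw.norm
    simp only [norm_zero] at this
    exact this.eventually (gt_mem_nhds (by positivity))
  filter_upwards [hsm] with n hn
  rw [fx_factor hd hdc, norm_neg, norm_mul, norm_pow]
  have hlow : (d:ℝ)/2 ≤ ‖(c:ℂ) * z n * (x n) ^ (c-d) + d‖ := by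
    have h1 : ‖(d:ℂ)‖ - ‖(c:ℂ) * z n * (x n) ^ (c-d)‖ ≤ ‖(c:ℂ) * z n * (x n) ^ (c-d) + d‖ := by
      have h2 : ‖(d:ℂ)‖ ≤ ‖(c:ℂ) * z n * (x n) ^ (c-d) + d‖ + ‖(c:ℂ) * z n * (x n) ^ (c-d)‖ := by
        calc ‖(d:ℂ)‖ = ‖((c:ℂ) * z n * (x n) ^ (c-d) + d) - (c:ℂ) * z n * (x n) ^ (c-d)‖ := by
              congr 1; ring
          _ ≤ _ := norm_sub_le _ _
      linarith
    rw [Complex.norm_natCast] at h1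
    linarith
  calc (d:ℝ)/2 * ‖x n‖ ^ (d-1) ≤ ‖x n‖ ^ (d-1) * ‖(c:ℂ) * z n * (x n) ^ (c-d) + d‖ := by
        rw [mul_comm ((d:ℝ)/2)]
        exact mul_le_mul_of_nonneg_left hlow (by positivity)
    _ = _ := rfl

-- ## negative direction
lemma not_aReg_neg (a c d : ℕ) (ha2 : 2 ≤ a) (hc : 0 < c) (hcd : c < d) :
    ¬ aRegC a 1 c d := by
  intro hA
  set x : ℕ → ℂ := fun n => ((1/((n:ℝ)+1) : ℝ) : ℂ) with hxdef
  set y : ℕ → ℂ := fun _ => 0 with hydef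
  set z : ℕ → ℂ := fun n => -(x n) ^ (d-c) with hzdef
  have hxnorm : ∀ n, ‖x n‖ = 1/((n:ℝ)+1) := by
    intro n
    rw [hxdef]
    simp only [Complex.norm_real, Real.norm_eq_abs]
    rw [abs_of_pos (by positivity)]
  have hxnz : ∀ n, x n ≠ 0 := by
    intro n h
    rw [hxdef] at h
    simp only [Complex.ofReal_eq_zero] at h
    have hp : (0:ℝ) < 1/((n:ℝ)+1) := by positivity
    rw [h] at hp
    exact lt_irrefl _ hp
  have hzx : ∀ n, z n * x n ^ c = -(x n ^ d) := by
    intro n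
    rw [hzdef]
    simp only
    rw [neg_mul, ← pow_add]
    congr 2
    omega
  have hX : ∀ n, inXC a 1 c d (x n) (y n) (z n) := by
    intro n
    constructor
    · rw [hydef]
      simp only [pow_one]
      rw [hzx n]
      rw [zero_pow (by omega : a ≠ 0)]
      ring
    · rintro ⟨h1, -⟩
      exact hxnz n h1
  have hx0 : Tendsto x atTop (nhds 0) := by
    rw [hxdef]
    have : Tendsto (fun n : ℕ => (1/((n:ℝ)+1) : ℝ)) atTop (nhds 0) :=
      tendsto_one_div_add_atTop_nhds_zero_nat
    have h2 := (Complex.continuous_ofReal.tendsto 0).comp this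
    simpa [Function.comp_def] using h2
  have hz0 : Tendsto z atTop (nhds 0) := by
    rw [hzdef]
    have := (hx0.pow (d-c)).neg
    simpa [zero_pow (by omega : d - c ≠ 0)] using this
  have htd : Tendsto (fun n => (x n, y n, z n)) atTop
      (nhds ((0:ℂ), (0:ℂ), (0:ℂ))) :=
    hx0.prodMk_nhds ((tendsto_const_nhds).prodMk_nhds hz0)
  have hfx : ∀ n, fxC 1 c d (x n) (z n) = ((c:ℂ) - d) * x n ^ (d-1) := by
    intro n
    simp only [fxC, pow_one]
    rw [hzdef]
    simp only
    have h1 : x n ^ (d-c) * x n ^ (c-1) = x n ^ (d-1) := by rw [← pow_add]; congr 1; omega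
    calc -(c:ℂ) * -(x n ^ (d-c)) * x n ^ (c-1) - (d:ℂ) * x n ^ (d-1)
        = (c:ℂ) * (x n ^ (d-c) * x n ^ (c-1)) - (d:ℂ) * x n ^ (d-1) := by ring
      _ = ((c:ℂ) - d) * x n ^ (d-1) := by rw [h1]; ring
  have hcdC : ((c:ℂ) - d) ≠ 0 := by
    intro h
    have : (c:ℂ) = d := by linear_combination h
    exact absurd (Nat.cast_injective this) (by omega)
  have hgr : ∀ n, gradNeC a 1 c d (x n) (y n) (z n) := by
    rintro n ⟨h1, -, -⟩
    rw [hfx n] at h1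
    exact (mul_ne_zero hcdC (pow_ne_zero _ (hxnz n))) h1
  have key := hA x y z hX htd hgr
  set δ := 1/Real.sqrt (((d:ℝ)-c)^2+1) with hδdef
  have hδ : 0 < δ := by positivity
  have hfy : ∀ n, fyC a (y n) = 0 := by
    intro n
    rw [hydef]
    simp only [fyC]
    rw [zero_pow (by omega : a - 1 ≠ 0)]
    ring
  have hlow : ∀ n, δ ≤ ‖fzC 1 c (x n) (z n)‖ / gradNormC a 1 c d (x n) (y n) (z n) := by
    intro n
    set t := ‖x n‖ with htdef
    have ht0 : 0 < t := norm_pos_iff.2 (hxnz n)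
    have ht1 : t ≤ 1 := by
      rw [htdef, hxnorm n]
      rw [div_le_one (by positivity)]
      linarith [Nat.cast_nonneg (α := ℝ) n]
    have hfznorm : ‖fzC 1 c (x n) (z n)‖ = t ^ c := norm_fz_one c _ _
    have hfxnorm : ‖fxC 1 c d (x n) (z n)‖ = ((d:ℝ) - c) * t ^ (d-1) := by
      rw [hfx n, norm_mul, norm_pow]
      congr 1
      have : ((c:ℂ) - d) = (((c:ℝ) - d : ℝ) : ℂ) := by push_cast; ring
      rw [this, Complex.norm_real, Real.norm_eq_abs, abs_of_neg (by
        have : (c:ℝ) < d := by exact_mod_cast hcd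
        linarith)]
      ring
    have hgradle : gradNormC a 1 c d (x n) (y n) (z n) ≤ Real.sqrt (((d:ℝ)-c)^2+1) * t^c := by
      have hgr_eq : gradNormC a 1 c d (x n) (y n) (z n)
          = Real.sqrt ((((d:ℝ) - c) * t ^ (d-1))^2 + 0 + (t^c)^2) := by
        rw [gradNormC, nrm3C, hfxnorm, hfy n, norm_zero, hfznorm]
        norm_num
      rw [hgr_eq]
      have hpow : t ^ (d-1) ≤ t ^ c := pow_le_pow_of_le_one ht0.le ht1 (by omega)
      have hdcpos : (0:ℝ) ≤ (d:ℝ) - c := by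
        have : (c:ℝ) ≤ d := by exact_mod_cast hcd.le
        linarith
      have h1 : (((d:ℝ) - c) * t ^ (d-1))^2 + 0 + (t^c)^2
          ≤ (((d:ℝ)-c)^2+1) * (t^c)^2 := by
        have h2 : (((d:ℝ) - c) * t ^ (d-1))^2 ≤ (((d:ℝ)-c) * t^c)^2 := by
          apply pow_le_pow_left₀ (by positivity)
          exact mul_le_mul_of_nonneg_left hpow hdcpos
        nlinarith [sq_nonneg (t^c)]
      calc Real.sqrt ((((d:ℝ) - c) * t ^ (d-1))^2 + 0 + (t^c)^2)
          ≤ Real.sqrt ((((d:ℝ)-c)^2+1) * (t^c)^2) := Real.sqrt_le_sqrt h1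
        _ = Real.sqrt (((d:ℝ)-c)^2+1) * t^c := by
            rw [Real.sqrt_mul (by positivity), Real.sqrt_sq (by positivity)]
    have hgradpos : 0 < gradNormC a 1 c d (x n) (y n) (z n) := by
      have h1 := grad_ge_fx a 1 c d (x n) (y n) (z n)
      rw [hfxnorm] at h1
      have : (0:ℝ) < ((d:ℝ) - c) * t ^ (d-1) := by
        apply mul_pos _ (by positivity)
        have : (c:ℝ) < d := by exact_mod_cast hcd
        linarith
      linarith
    rw [hfznorm, hδdef]
    rw [div_le_div_iff₀ (by positivity) hgradpos]
    calc 1 * gradNormC a 1 c d (x n) (y n) (z n)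
        ≤ Real.sqrt (((d:ℝ)-c)^2+1) * t^c := by rw [one_mul]; exact hgradle
      _ = t ^ c * Real.sqrt (((d:ℝ)-c)^2+1) := by ring
  have := ge_of_tendsto' key hlow
  linarith

-- ## positive direction: (a)-regularity

lemma norm_x_pow_tendsto {x : ℕ → ℂ} (hx : Tendsto x atTop (nhds 0)) {k : ℕ} (hk : 0 < k) :
    Tendsto (fun n => ‖x n‖ ^ k) atTop (nhds 0) := by
  have h1 : Tendsto (fun n => ‖x n‖) atTop (nhds 0) := by
    have := hx.norm; simpa using this
  have := h1.pow k
  simpa [zero_pow hk.ne'] using this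

lemma aReg_a1 (c d : ℕ) (hc : 0 < c) (hd : 0 < d) : aRegC 1 1 c d := by
  intro x y z hX htd hgr
  have hx := seq_x htd
  apply squeeze_zero (fun n => div_nonneg (norm_nonneg _) (grad_nonneg _ _ _ _ _ _ _))
    (g := fun n => ‖x n‖ ^ c) ?_ (norm_x_pow_tendsto hx hc)
  intro n
  have h1 : (1:ℝ) ≤ gradNormC 1 1 c d (x n) (y n) (z n) := by
    have h2 := grad_ge_fy 1 1 c d (x n) (y n) (z n)
    simpa [fyC] using h2
  calc ‖fzC 1 c (x n) (z n)‖ / gradNormC 1 1 c d (x n) (y n) (z n)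
      ≤ ‖fzC 1 c (x n) (z n)‖ := div_le_self (norm_nonneg _) h1
    _ = ‖x n‖ ^ c := norm_fz_one c _ _

lemma aReg_dc (a c d : ℕ) (ha : 0 < a) (hc : 0 < c) (hd : 0 < d) (hdc : d ≤ c) :
    aRegC a 1 c d := by
  intro x y z hX htd hgr
  have hx := seq_x htd
  have hz := seq_z htd
  apply squeeze_zero' (Eventually.of_forall
      (fun n => div_nonneg (norm_nonneg _) (grad_nonneg _ _ _ _ _ _ _)))
    (g := fun n => 2/(d:ℝ) * ‖x n‖ ^ (c+1-d)) ?_ ?_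
  · filter_upwards [ev_fx hd hdc hx hz] with n hfxn
    set t := ‖x n‖ with htdef
    have ht : 0 < t := norm_pos_iff.2 (x_ne_zero ha hc hd (hX n))
    have hgradge : (d:ℝ)/2 * t^(d-1) ≤ gradNormC a 1 c d (x n) (y n) (z n) :=
      le_trans hfxn (grad_ge_fx a 1 c d (x n) (y n) (z n))
    have hgradpos : 0 < gradNormC a 1 c d (x n) (y n) (z n) :=
      lt_of_lt_of_le (by positivity) hgradge
    rw [norm_fz_one, div_le_iff₀ hgradpos]
    have hsplit : t^(c+1-d) * t^(d-1) = t^c := by rw [← pow_add]; congr 1; omega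
    calc t ^ c = 2/(d:ℝ) * t^(c+1-d) * ((d:ℝ)/2 * t^(d-1)) := by
          rw [show 2/(d:ℝ) * t^(c+1-d) * ((d:ℝ)/2 * t^(d-1))
              = (2/(d:ℝ) * ((d:ℝ)/2)) * (t^(c+1-d) * t^(d-1)) from by ring, hsplit]
          have hd' : (d:ℝ) ≠ 0 := Nat.cast_ne_zero.2 hd.ne'
          rw [show 2/(d:ℝ) * ((d:ℝ)/2) = 1 from by field_simp, one_mul]
      _ ≤ _ := mul_le_mul_of_nonneg_left hgradge (by positivity)
  · have := (norm_x_pow_tendsto hx (k := c+1-d) (by omega)).const_mul (2/(d:ℝ))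
    simpa using this

-- ## bpi helpers

lemma numer_eq (a c d : ℕ) (ha : 0 < a) (hc : 0 < c) (hd : 0 < d) (x y z : ℂ)
    (hV : y ^ a = z ^ 1 * x ^ c + x ^ d) :
    x * fxC 1 c d x z + y * fyC a y = ((a:ℂ)-c)*(z*x^c) + ((a:ℂ)-d)*x^d := by
  have h1 : x * x^(c-1) = x^c := by rw [← pow_succ']; congr 1; omega
  have h2 : x * x^(d-1) = x^d := by rw [← pow_succ']; congr 1; omega
  have h3 : y * y^(a-1) = y^a := by rw [← pow_succ']; congr 1; omega
  rw [pow_one] at hV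
  simp only [fxC, fyC, pow_one]
  calc x * (-(c:ℂ) * z * x^(c-1) - d * x^(d-1)) + y * ((a:ℂ) * y^(a-1))
      = -(c:ℂ)*z*(x*x^(c-1)) - (d:ℂ)*(x*x^(d-1)) + (a:ℂ)*(y*y^(a-1)) := by ring
    _ = -(c:ℂ)*z*x^c - (d:ℂ)*x^d + (a:ℂ)*(z*x^c + x^d) := by rw [h1, h2, h3, hV]
    _ = ((a:ℂ)-c)*(z*x^c) + ((a:ℂ)-d)*x^d := by ring

lemma ev_y (a c d : ℕ) (ha : 0 < a) (hc : 0 < c) (hd : 0 < d) (hdc : d ≤ c)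
    {x y z : ℕ → ℂ} (hx : Tendsto x atTop (nhds 0)) (hz : Tendsto z atTop (nhds 0))
    (hX : ∀ n, inXC a 1 c d (x n) (y n) (z n)) :
    ∀ᶠ n in atTop, ‖x n‖^d/2 ≤ ‖y n‖^a ∧ ‖y n‖^a ≤ 2*‖x n‖^d := by
  have hw : Tendsto (fun n => z n * (x n) ^ (c-d)) atTop (nhds 0) := by
    have := hz.mul (hx.pow (c-d))
    simpa using this
  have hsm : ∀ᶠ n in atTop, ‖z n * (x n) ^ (c-d)‖ < 1/2 := by
    have := hw.norm
    simp only [norm_zero] at this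
    exact this.eventually (gt_mem_nhds (by norm_num))
  filter_upwards [hsm] with n hn
  set w := z n * (x n) ^ (c-d) with hwdef
  have hfac : (y n)^a = (x n)^d * (w + 1) := by
    have hV := (hX n).1
    rw [pow_one] at hV
    rw [hV, hwdef]
    have : (x n)^c = (x n)^d * (x n)^(c-d) := by rw [← pow_add]; congr 1; omega
    rw [this]; ring
  have hna : ‖y n‖^a = ‖x n‖^d * ‖w + 1‖ := by
    rw [← norm_pow, ← norm_pow, hfac, norm_mul]
  have hw1lo : 1/2 ≤ ‖w + 1‖ := by
    have h1 : ‖(1:ℂ)‖ ≤ ‖w + 1‖ + ‖w‖ := by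
      calc ‖(1:ℂ)‖ = ‖(w + 1) - w‖ := by congr 1; ring
        _ ≤ _ := norm_sub_le _ _
    rw [norm_one] at h1
    linarith
  have hw1hi : ‖w + 1‖ ≤ 2 := by
    have := norm_add_le w 1
    rw [norm_one] at this
    linarith
  constructor
  · rw [hna]
    calc ‖x n‖^d/2 = ‖x n‖^d * (1/2) := by ring
      _ ≤ _ := mul_le_mul_of_nonneg_left hw1lo (by positivity)
  · rw [hna]
    calc ‖x n‖^d * ‖w + 1‖ ≤ ‖x n‖^d * 2 := mul_le_mul_of_nonneg_left hw1hi (by positivity)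
      _ = 2*‖x n‖^d := by ring

lemma tendsto_K_z_pow (K : ℝ) {x z : ℕ → ℂ} (hx : Tendsto x atTop (nhds 0))
    (hz : Tendsto z atTop (nhds 0)) (k : ℕ) :
    Tendsto (fun n => K * (‖z n‖ * ‖x n‖^k)) atTop (nhds 0) := by
  have h1 : Tendsto (fun n => ‖z n‖) atTop (nhds 0) := by have := hz.norm; simpa using this
  have h2 : Tendsto (fun n => ‖x n‖) atTop (nhds 0) := by have := hx.norm; simpa using this
  have h3 := h1.mul (h2.pow k)
  have h4 := h3.const_mul K
  simpa using h4

lemma bpi_a1 (c d : ℕ) (hc : 0 < c) (hd : 0 < d) : bpiC 1 1 c d := by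
  intro x y z hX htd hgr
  set A := ‖(1:ℂ) - (c:ℕ)‖ with hAdef
  set B := ‖(1:ℂ) - (d:ℕ)‖ with hBdef
  apply squeeze_zero' (Eventually.of_forall (fun n =>
      div_nonneg (norm_nonneg _) (mul_nonneg (nrm2_nonneg _ _) (grad_nonneg _ _ _ _ _ _ _))))
    (g := fun n => A * (‖z n‖ * ‖x n‖^(c-1)) + B * ‖x n‖^(d-1)) ?_ ?_
  · apply Eventually.of_forall
    intro n
    set t := ‖x n‖ with htdef
    have ht : 0 < t := norm_pos_iff.2 (x_ne_zero one_pos hc hd (hX n))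
    have hgrad1 : (1:ℝ) ≤ gradNormC 1 1 c d (x n) (y n) (z n) := by
      have h2 := grad_ge_fy 1 1 c d (x n) (y n) (z n)
      simpa [fyC] using h2
    have hD : t ≤ nrm2C (x n) (y n) * gradNormC 1 1 c d (x n) (y n) (z n) := by
      calc t = t * 1 := (mul_one t).symm
        _ ≤ _ := mul_le_mul (nrm2_ge1 _ _) hgrad1 zero_le_one (nrm2_nonneg _ _)
    have hN : ‖x n * fxC 1 c d (x n) (z n) + y n * fyC 1 (y n)‖
        ≤ (A * (‖z n‖ * t^(c-1)) + B * t^(d-1)) * t := by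
      rw [numer_eq 1 c d one_pos hc hd _ _ _ (hX n).1]
      push_cast
      calc ‖((1:ℂ)-c)*(z n * x n^c) + ((1:ℂ)-d)* x n^d‖
          ≤ ‖((1:ℂ)-c)*(z n * x n^c)‖ + ‖((1:ℂ)-d)* x n^d‖ := norm_add_le _ _
        _ = A * (‖z n‖ * t^c) + B * t^d := by
            rw [norm_mul, norm_mul, norm_mul, norm_pow, norm_pow]
        _ = (A * (‖z n‖ * t^(c-1)) + B * t^(d-1)) * t := by
            have h1 : t^(c-1) * t = t^c := by rw [← pow_succ]; congr 1; omega
            have h2 : t^(d-1) * t = t^d := by rw [← pow_succ]; congr 1; omega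
            rw [← h1, ← h2]; ring
    have hDpos : (0:ℝ) < nrm2C (x n) (y n) * gradNormC 1 1 c d (x n) (y n) (z n) :=
      lt_of_lt_of_le ht hD
    rw [div_le_iff₀ hDpos]
    calc ‖x n * fxC 1 c d (x n) (z n) + y n * fyC 1 (y n)‖
        ≤ (A * (‖z n‖ * t^(c-1)) + B * t^(d-1)) * t := hN
      _ ≤ _ := by
          apply mul_le_mul_of_nonneg_left hD
          positivity
  · have h1 := tendsto_K_z_pow A (seq_x htd) (seq_z htd) (c-1)
    have h2 : Tendsto (fun n => B * ‖x n‖^(d-1)) atTop (nhds 0) := by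
      rcases Nat.lt_or_ge 1 d with h | h
      · have := (norm_x_pow_tendsto (seq_x htd) (k := d-1) (by omega)).const_mul B
        simpa using this
      · have hd1 : d = 1 := by omega
        have hB0 : B = 0 := by rw [hBdef, hd1]; simp
        simp only [hB0, zero_mul]
        exact tendsto_const_nhds
    have := h1.add h2
    simpa using this

lemma bpi_dc (a c d : ℕ) (ha : 0 < a) (hc : 0 < c) (hd : 0 < d) (hdc : d ≤ c) :
    bpiC a 1 c d := by
  intro x y z hX htd hgr
  have hx := seq_x htd
  have hz := seq_z htd
  set A := ‖(a:ℂ) - (c:ℕ)‖ with hAdef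
  set B := ‖(a:ℂ) - (d:ℕ)‖ with hBdef
  have Efx := ev_fx hd hdc hx hz
  have Ey := ev_y a c d ha hc hd hdc hx hz hX
  set D : ℕ → ℝ := fun n => nrm2C (x n) (y n) * gradNormC a 1 c d (x n) (y n) (z n) with hDdef
  have hDnn : ∀ n, 0 ≤ D n := fun n =>
    mul_nonneg (nrm2_nonneg _ _) (grad_nonneg _ _ _ _ _ _ _)
  have hNle : ∀ n, ‖x n * fxC 1 c d (x n) (z n) + y n * fyC a (y n)‖
      ≤ A * (‖z n‖ * ‖x n‖^c) + B * ‖x n‖^d := by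
    intro n
    rw [numer_eq a c d ha hc hd _ _ _ (hX n).1]
    calc ‖((a:ℂ)-c)*(z n * x n^c) + ((a:ℂ)-d)* x n^d‖
        ≤ ‖((a:ℂ)-c)*(z n * x n^c)‖ + ‖((a:ℂ)-d)* x n^d‖ := norm_add_le _ _
      _ = A * (‖z n‖ * ‖x n‖^c) + B * ‖x n‖^d := by
          rw [norm_mul, norm_mul, norm_mul, norm_pow, norm_pow]
  have htpos : ∀ n, 0 < ‖x n‖ := fun n => norm_pos_iff.2 (x_ne_zero ha hc hd (hX n))
  have hdR : ((d:ℝ)) ≠ 0 := Nat.cast_ne_zero.2 hd.ne'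
  have hT1 : Tendsto (fun n => (2*A/d) * (‖z n‖ * ‖x n‖^(c-d))) atTop (nhds 0) :=
    tendsto_K_z_pow _ hx hz (c-d)
  -- eventual positivity of ‖y‖
  have Eyp : ∀ᶠ n in atTop, 0 < ‖y n‖ := by
    filter_upwards [Ey] with n hyn
    by_contra hcon
    push_neg at hcon
    have h0 : ‖y n‖ = 0 := le_antisymm hcon (norm_nonneg _)
    have h1 := hyn.1
    rw [h0, zero_pow ha.ne'] at h1
    nlinarith [pow_pos (htpos n) d]
  rcases le_or_gt d a with hda | hda
  · -- d ≤ a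
    apply squeeze_zero' (Eventually.of_forall (fun n => div_nonneg (norm_nonneg _) (hDnn n)))
      (g := fun n => (2*A/d) * (‖z n‖ * ‖x n‖^(c-d)) + (2*B/d) * (‖x n‖/‖y n‖)) ?_ ?_
    · filter_upwards [Efx, Ey, Eyp] with n hfxn hyn hyp
      set t := ‖x n‖ with htdef
      have ht : 0 < t := htpos n
      have hgradfx : (d:ℝ)/2 * t^(d-1) ≤ gradNormC a 1 c d (x n) (y n) (z n) :=
        le_trans hfxn (grad_ge_fx a 1 c d (x n) (y n) (z n))
      have hD1 : (d:ℝ)/2 * t^d ≤ D n := by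
        have h5 := mul_le_mul (nrm2_ge1 (x n) (y n)) hgradfx (by positivity) (nrm2_nonneg _ _)
        calc (d:ℝ)/2 * t^d = t * ((d:ℝ)/2 * t^(d-1)) := by
              rw [show t^d = t * t^(d-1) from by rw [← pow_succ']; congr 1; omega]; ring
          _ ≤ _ := h5
      have hD2 : ‖y n‖ * ((d:ℝ)/2 * t^(d-1)) ≤ D n :=
        mul_le_mul (nrm2_ge2 (x n) (y n)) hgradfx (by positivity) (nrm2_nonneg _ _)
      have hDpos : 0 < D n := lt_of_lt_of_le (by positivity) hD1
      have q1 : (A * (‖z n‖ * t^c)) / ((d:ℝ)/2 * t^d) = (2*A/d) * (‖z n‖ * t^(c-d)) := by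
        rw [show t^c = t^d * t^(c-d) from by rw [← pow_add]; congr 1; omega]
        rw [div_eq_iff (by positivity)]
        field_simp
      have q2 : (B * t^d) / (‖y n‖ * ((d:ℝ)/2 * t^(d-1))) = (2*B/d) * (t/‖y n‖) := by
        rw [show t^d = t^(d-1) * t from by rw [← pow_succ]; congr 1; omega]
        rw [div_mul_div_comm]
        rw [div_eq_div_iff (by positivity) (by positivity)]
        ring
      calc ‖x n * fxC 1 c d (x n) (z n) + y n * fyC a (y n)‖ / D n
          ≤ (A * (‖z n‖ * t^c) + B * t^d) / D n :=
            (div_le_div_iff_of_pos_right hDpos).mpr (hNle n)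
        _ = (A * (‖z n‖ * t^c)) / D n + (B * t^d) / D n := add_div _ _ _
        _ ≤ (A * (‖z n‖ * t^c)) / ((d:ℝ)/2 * t^d)
            + (B * t^d) / (‖y n‖ * ((d:ℝ)/2 * t^(d-1))) := by
            apply add_le_add
            · exact div_le_div_of_nonneg_left (by positivity) (by positivity) hD1
            · exact div_le_div_of_nonneg_left (by positivity) (by positivity) hD2
        _ = (2*A/d) * (‖z n‖ * t^(c-d)) + (2*B/d) * (t/‖y n‖) := by rw [q1, q2]
    · -- tendsto of the bound
      have hT2 : Tendsto (fun n => (2*B/d) * (‖x n‖/‖y n‖)) atTop (nhds 0) := by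
        rcases eq_or_lt_of_le hda with had | had
        · have hB0 : B = 0 := by rw [hBdef, ← had]; simp
          simp only [hB0, mul_zero, zero_div, zero_mul]
          exact tendsto_const_nhds
        · have hQ : Tendsto (fun n => ‖x n‖/‖y n‖) atTop (nhds 0) := by
            apply tendsto_zero_of_pow a _
              (fun n => div_nonneg (norm_nonneg _) (norm_nonneg _))
            apply squeeze_zero' (Eventually.of_forall (fun n =>
                pow_nonneg (div_nonneg (norm_nonneg _) (norm_nonneg _)) a))
              (g := fun n => 2 * ‖x n‖^(a-d)) ?_ ?_
            · filter_upwards [Ey] with n hyn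
              set t := ‖x n‖ with htdef
              have ht : 0 < t := htpos n
              rw [div_pow]
              have h1 : t^a/‖y n‖^a ≤ t^a/(t^d/2) :=
                div_le_div_of_nonneg_left (by positivity) (by positivity) hyn.1
              have h2 : t^a/(t^d/2) = 2*t^(a-d) := by
                rw [show t^a = t^d * t^(a-d) from by rw [← pow_add]; congr 1; omega]
                rw [div_eq_iff (by positivity)]
                ring
              linarith
            · have := (norm_x_pow_tendsto hx (k := a-d) (by omega)).const_mul 2
              simpa using this
          have := hQ.const_mul (2*B/d)
          simpa using this
      have := hT1.add hT2
      simpa using this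
  · -- a < d : use D ≥ t * (a * ‖y‖^(a-1))
    apply squeeze_zero' (Eventually.of_forall (fun n => div_nonneg (norm_nonneg _) (hDnn n)))
      (g := fun n => (2*A/d) * (‖z n‖ * ‖x n‖^(c-d))
        + (B/(a:ℝ)) * (‖x n‖^(d-1)/‖y n‖^(a-1))) ?_ ?_
    · filter_upwards [Efx, Ey, Eyp] with n hfxn hyn hyp
      set t := ‖x n‖ with htdef
      have ht : 0 < t := htpos n
      have hgradfx : (d:ℝ)/2 * t^(d-1) ≤ gradNormC a 1 c d (x n) (y n) (z n) :=
        le_trans hfxn (grad_ge_fx a 1 c d (x n) (y n) (z n))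
      have hfy : ‖fyC a (y n)‖ = (a:ℝ) * ‖y n‖^(a-1) := by
        rw [fyC, norm_mul, norm_pow, Complex.norm_natCast]
      have hgradfy : (a:ℝ) * ‖y n‖^(a-1) ≤ gradNormC a 1 c d (x n) (y n) (z n) := by
        rw [← hfy]; exact grad_ge_fy a 1 c d (x n) (y n) (z n)
      have hD1 : (d:ℝ)/2 * t^d ≤ D n := by
        have h5 := mul_le_mul (nrm2_ge1 (x n) (y n)) hgradfx (by positivity) (nrm2_nonneg _ _)
        calc (d:ℝ)/2 * t^d = t * ((d:ℝ)/2 * t^(d-1)) := by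
              rw [show t^d = t * t^(d-1) from by rw [← pow_succ']; congr 1; omega]; ring
          _ ≤ _ := h5
      have hD3 : t * ((a:ℝ) * ‖y n‖^(a-1)) ≤ D n :=
        mul_le_mul (nrm2_ge1 (x n) (y n)) hgradfy (by positivity) (nrm2_nonneg _ _)
      have hDpos : 0 < D n := lt_of_lt_of_le (by positivity) hD1
      have q1 : (A * (‖z n‖ * t^c)) / ((d:ℝ)/2 * t^d) = (2*A/d) * (‖z n‖ * t^(c-d)) := by
        rw [show t^c = t^d * t^(c-d) from by rw [← pow_add]; congr 1; omega]
        rw [div_eq_iff (by positivity)]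
        field_simp
      have q3 : (B * t^d) / (t * ((a:ℝ) * ‖y n‖^(a-1)))
          = (B/(a:ℝ)) * (t^(d-1)/‖y n‖^(a-1)) := by
        rw [show t^d = t * t^(d-1) from by rw [← pow_succ']; congr 1; omega]
        rw [div_mul_div_comm]
        rw [div_eq_div_iff (by positivity) (by positivity)]
        ring
      calc ‖x n * fxC 1 c d (x n) (z n) + y n * fyC a (y n)‖ / D n
          ≤ (A * (‖z n‖ * t^c) + B * t^d) / D n :=
            (div_le_div_iff_of_pos_right hDpos).mpr (hNle n)
        _ = (A * (‖z n‖ * t^c)) / D n + (B * t^d) / D n := add_div _ _ _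
        _ ≤ (A * (‖z n‖ * t^c)) / ((d:ℝ)/2 * t^d)
            + (B * t^d) / (t * ((a:ℝ) * ‖y n‖^(a-1))) := by
            apply add_le_add
            · exact div_le_div_of_nonneg_left (by positivity) (by positivity) hD1
            · exact div_le_div_of_nonneg_left (by positivity) (by positivity) hD3
        _ = (2*A/d) * (‖z n‖ * t^(c-d))
            + (B/(a:ℝ)) * (t^(d-1)/‖y n‖^(a-1)) := by rw [q1, q3]
    · have hT2 : Tendsto (fun n => (B/(a:ℝ)) * (‖x n‖^(d-1)/‖y n‖^(a-1)))
          atTop (nhds 0) := by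
        have hexp : (d-1)*a = d*(a-1)+(d-a) := by
          zify [show (1:ℕ) ≤ a from ha, show (1:ℕ) ≤ d from hd, show a ≤ d from hda.le]
          ring
        have hQ : Tendsto (fun n => ‖x n‖^(d-1)/‖y n‖^(a-1)) atTop (nhds 0) := by
          apply tendsto_zero_of_pow a _
            (fun n => div_nonneg (by positivity) (by positivity))
          apply squeeze_zero' (Eventually.of_forall (fun n =>
              pow_nonneg (div_nonneg (by positivity) (by positivity)) a))
            (g := fun n => 2^(a-1) * ‖x n‖^(d-a)) ?_ ?_
          · filter_upwards [Ey] with n hyn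
            set t := ‖x n‖ with htdef
            have ht : 0 < t := htpos n
            rw [div_pow]
            have hyy : (‖y n‖^(a-1))^a = (‖y n‖^a)^(a-1) := by
              rw [← pow_mul, ← pow_mul, Nat.mul_comm]
            rw [hyy]
            have h1 : (t^(d-1))^a/(‖y n‖^a)^(a-1) ≤ (t^(d-1))^a/((t^d/2)^(a-1)) := by
              apply div_le_div_of_nonneg_left (by positivity) (by positivity)
              exact pow_le_pow_left₀ (by positivity) hyn.1 _
            have h2 : (t^(d-1))^a/((t^d/2)^(a-1)) = 2^(a-1)*t^(d-a) := by
              rw [← pow_mul, div_pow, ← pow_mul]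
              rw [show t^((d-1)*a) = t^(d*(a-1)) * t^(d-a) from by
                rw [hexp, pow_add]]
              have h7 : ((2:ℝ))^(a-1) ≠ 0 := by positivity
              rw [div_eq_iff (by positivity)]
              field_simp
            linarith
          · have := (norm_x_pow_tendsto hx (k := d-a) (by omega)).const_mul (2^(a-1) : ℝ)
            simpa using this
        have := hQ.const_mul (B/(a:ℝ))
        simpa using this
      have := hT1.add hT2
      simpa using this

/-- For b = 1, Whitney (a)- and (b)-regularity coincide for y^a = z x^c + x^d in ℂ³,
both being equivalent to (a = 1 or d ≤ c). -/
theorem whitney_a_iff_b_complex_b_eq_one (a c d : ℕ) (ha : 0 < a) (hc : 0 < c) (hd : 0 < d) :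
    (aRegC a 1 c d ↔ bRegC a 1 c d) ∧
      (aRegC a 1 c d ↔ (a = 1 ∨ d ≤ c)) ∧
      (bRegC a 1 c d ↔ (a = 1 ∨ d ≤ c)) := by
  have hposa : (a = 1 ∨ d ≤ c) → aRegC a 1 c d := by
    rintro (rfl | hdc)
    · exact aReg_a1 c d hc hd
    · exact aReg_dc a c d ha hc hd hdc
  have hposb : (a = 1 ∨ d ≤ c) → bpiC a 1 c d := by
    rintro (rfl | hdc)
    · exact bpi_a1 c d hc hd
    · exact bpi_dc a c d ha hc hd hdc
  have hneg : aRegC a 1 c d → (a = 1 ∨ d ≤ c) := by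
    intro h
    by_contra hP
    push_neg at hP
    exact not_aReg_neg a c d (by omega) hc hP.2 h
  have h2 : aRegC a 1 c d ↔ (a = 1 ∨ d ≤ c) := ⟨hneg, hposa⟩
  have h3 : bRegC a 1 c d ↔ (a = 1 ∨ d ≤ c) :=
    ⟨fun h => hneg h.1, fun hP => ⟨hposa hP, hposb hP⟩⟩
  exact ⟨h2.trans h3.symm, h2, h3⟩
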